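/- arXiv:2006.11027 — 2 statements merged into one kernel-verified Lean document; each statement's English description precedes it below -/
import Mathlib

section
/- For every z > 0: g_z(w) ≤ 3/(2(1 − w)³) for all w < 0, and g_z(w) ≤ 3/(1 + w)³ for all w > z. -/
noncomputable section

/-- The standard normal cumulative distribution function
`Φ(w) = ∫_{-∞}^w (1/√(2π)) e^{-t²/2} dt`. -/
def Phi (w : ℝ) : ℝ :=
  ∫ t in Set.Iic w, (1 / Real.sqrt (2 * Real.pi)) * Real.exp (-t ^ 2 / 2)

/-- The function `g_z = (w f_z(w))'` where `f_z` is the bounded solution of the Stein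
equation for the indicator of `(-∞, z]`. -/
def gz (z w : ℝ) : ℝ :=
  if z < w then
    (Real.sqrt (2 * Real.pi) * (1 + w ^ 2) * Real.exp (w ^ 2 / 2) * (1 - Phi w) - w) * Phi z
  else
    (Real.sqrt (2 * Real.pi) * (1 + w ^ 2) * Real.exp (w ^ 2 / 2) * Phi w + w) * (1 - Phi z)

open Real Set Filter MeasureTheory Topology

def phi (t : ℝ) : ℝ := (1 / Real.sqrt (2 * Real.pi)) * Real.exp (-t ^ 2 / 2)

lemma phi_pos (t : ℝ) : 0 < phi t := by
  have h : 0 < Real.sqrt (2 * Real.pi) := Real.sqrt_pos.2 (by positivity)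
  exact mul_pos (by positivity) (Real.exp_pos _)

lemma phi_cont : Continuous phi := by
  unfold phi
  fun_prop

lemma phi_integrable : Integrable phi := by
  have h : Integrable (fun t : ℝ => Real.exp (-(1/2) * t ^ 2)) :=
    integrable_exp_neg_mul_sq (by norm_num)
  have h2 : phi = fun t => (1 / Real.sqrt (2 * Real.pi)) * Real.exp (-(1/2) * t ^ 2) := by
    funext t; unfold phi; ring_nf
  rw [h2]
  exact h.const_mul _

lemma integral_phi : ∫ t, phi t = 1 := by
  have h : ∫ t : ℝ, Real.exp (-(1/2) * t ^ 2) = Real.sqrt (Real.pi / (1/2)) :=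
    integral_gaussian (1/2)
  have h2 : phi = fun t => (1 / Real.sqrt (2 * Real.pi)) * Real.exp (-(1/2) * t ^ 2) := by
    funext t; unfold phi; ring_nf
  rw [h2, MeasureTheory.integral_const_mul, h]
  have : Real.pi / (1/2) = 2 * Real.pi := by ring
  rw [this]
  have hs : Real.sqrt (2 * Real.pi) ≠ 0 := ne_of_gt (Real.sqrt_pos.2 (by positivity))
  field_simp

lemma Phi_eq (w : ℝ) : Phi w = ∫ t in Set.Iic w, phi t := rfl

lemma hasDerivAt_Phi (w : ℝ) : HasDerivAt Phi (phi w) w := by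
  have key : ∀ x : ℝ, Phi x = Phi 0 + ∫ t in (0:ℝ)..x, phi t := by
    intro x
    rw [Phi_eq, Phi_eq, ← intervalIntegral.integral_Iic_sub_Iic
      (phi_integrable.integrableOn) (phi_integrable.integrableOn)]
    ring
  have h : HasDerivAt (fun x => Phi 0 + ∫ t in (0:ℝ)..x, phi t) (phi w) w := by
    refine HasDerivAt.const_add _ ?_
    exact intervalIntegral.integral_hasDerivAt_right
      phi_integrable.intervalIntegrable
      (phi_cont.stronglyMeasurable.stronglyMeasurableAtFilter)
      phi_cont.continuousAt
  have : Phi = fun x => Phi 0 + ∫ t in (0:ℝ)..x, phi t := funext key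
  rw [this]
  exact h

lemma Phi_tendsto : Tendsto Phi atTop (𝓝 1) := by
  have h1 : Tendsto (fun x : ℝ => ∫ t in (0:ℝ)..x, phi t) atTop
      (𝓝 (∫ t in Set.Ioi (0:ℝ), phi t)) :=
    intervalIntegral_tendsto_integral_Ioi 0 phi_integrable.integrableOn tendsto_id
  have key : ∀ x : ℝ, Phi x = Phi 0 + ∫ t in (0:ℝ)..x, phi t := by
    intro x
    rw [Phi_eq, Phi_eq, ← intervalIntegral.integral_Iic_sub_Iic
      (phi_integrable.integrableOn) (phi_integrable.integrableOn)]
    ring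
  have h2 : Tendsto Phi atTop (𝓝 (Phi 0 + ∫ t in Set.Ioi (0:ℝ), phi t)) :=
    (tendsto_const_nhds.add h1).congr fun x => (key x).symm
  have h3 : Phi 0 + ∫ t in Set.Ioi (0:ℝ), phi t = 1 := by
    rw [Phi_eq, intervalIntegral.integral_Iic_add_Ioi
      phi_integrable.integrableOn phi_integrable.integrableOn, integral_phi]
  rwa [h3] at h2

lemma Phi_neg (x : ℝ) : Phi (-x) = 1 - Phi x := by
  have hsym : ∀ t : ℝ, phi (-t) = phi t := by
    intro t; unfold phi; ring_nf
  have h1 : Phi (-x) = ∫ t in Set.Iic (-x), phi (-t) := by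
    rw [Phi_eq]; congr 1; funext t; rw [hsym]
  rw [h1, integral_comp_neg_Iic]
  have h2 : Phi x + ∫ t in Set.Ioi x, phi t = 1 := by
    rw [Phi_eq, intervalIntegral.integral_Iic_add_Ioi
      phi_integrable.integrableOn phi_integrable.integrableOn, integral_phi]
  simp only [neg_neg]
  linarith

lemma Phi_nonneg (x : ℝ) : 0 ≤ Phi x := by
  rw [Phi_eq]
  exact MeasureTheory.setIntegral_nonneg measurableSet_Iic (fun t _ => (phi_pos t).le)

lemma Phi_le_one (x : ℝ) : Phi x ≤ 1 := by
  have := Phi_neg x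
  have := Phi_nonneg (-x)
  linarith

lemma Phi_half (z : ℝ) (hz : 0 < z) : 1/2 ≤ Phi z := by
  have h0 : Phi 0 = 1/2 := by have := Phi_neg 0; simp at this; linarith
  have key : Phi z - Phi 0 = ∫ t in (0:ℝ)..z, phi t := by
    rw [Phi_eq, Phi_eq]
    exact intervalIntegral.integral_Iic_sub_Iic phi_integrable.integrableOn phi_integrable.integrableOn
  have hnn : 0 ≤ ∫ t in (0:ℝ)..z, phi t :=
    intervalIntegral.integral_nonneg hz.le (fun t _ => (phi_pos t).le)
  linarith

lemma phi_le_one (t : ℝ) : phi t ≤ 1 := by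
  have h1 : (1:ℝ) ≤ Real.sqrt (2 * Real.pi) := by
    rw [show (1:ℝ) = Real.sqrt 1 by simp]
    exact Real.sqrt_le_sqrt (by nlinarith [Real.pi_gt_three])
  have h2 : Real.exp (-t ^ 2 / 2) ≤ 1 := Real.exp_le_one_iff.2 (by nlinarith [sq_nonneg t])
  have h3 : 0 < Real.sqrt (2 * Real.pi) := by linarith
  unfold phi
  calc 1 / Real.sqrt (2 * Real.pi) * Real.exp (-t ^ 2 / 2) ≤ 1 / Real.sqrt (2 * Real.pi) * 1 :=
        mul_le_mul_of_nonneg_left h2 (by positivity)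
    _ = 1 / Real.sqrt (2 * Real.pi) := mul_one _
    _ ≤ 1 := by rw [div_le_one h3]; exact h1

lemma hasDerivAt_phi (y : ℝ) : HasDerivAt phi (-y * phi y) y := by
  have h1 : HasDerivAt (fun t : ℝ => -t ^ 2 / 2) (-y) y := by
    have h := ((hasDerivAt_pow 2 y).neg).div_const 2
    exact h.congr_deriv (by simp; ring)
  have h2 := (h1.exp).const_mul (1 / Real.sqrt (2 * Real.pi))
  exact h2.congr_deriv (by unfold phi; ring)

/-- G, the upper Mills bound -/
def G (y : ℝ) : ℝ := (3 + y * (1 + y) ^ 3) / ((1 + y) ^ 3 * (1 + y ^ 2))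

lemma mills_lower (x : ℝ) : x / (1 + x ^ 2) * phi x ≤ 1 - Phi x := by
  set u : ℝ → ℝ := fun y => 1 - Phi y - y / (1 + y ^ 2) * phi y with hu_def
  have hne : ∀ y : ℝ, (1 + y ^ 2) ≠ 0 := fun y => by positivity
  have hu : ∀ y : ℝ, HasDerivAt u
      (-phi y - (((1 * (1 + y ^ 2) - y * (2 * y)) / (1 + y ^ 2) ^ 2) * phi y
        + y / (1 + y ^ 2) * (-y * phi y))) y := by
    intro y
    have hq : HasDerivAt (fun y : ℝ => y / (1 + y ^ 2))
        ((1 * (1 + y ^ 2) - y * (2 * y)) / (1 + y ^ 2) ^ 2) y := by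
      have hden : HasDerivAt (fun y : ℝ => 1 + y ^ 2) (2 * y) y := by
        have := (hasDerivAt_pow 2 y).const_add 1
        exact this.congr_deriv (by simp)
      exact (hasDerivAt_id y).div hden (hne y)
    exact ((hasDerivAt_Phi y).const_sub 1).sub (hq.mul (hasDerivAt_phi y))
  have hderiv_nonpos : ∀ y : ℝ, deriv u y ≤ 0 := by
    intro y
    rw [(hu y).deriv]
    have hkey : -phi y - (((1 * (1 + y ^ 2) - y * (2 * y)) / (1 + y ^ 2) ^ 2) * phi y
        + y / (1 + y ^ 2) * (-y * phi y)) = -(2 / (1 + y ^ 2) ^ 2 * phi y) := by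
      field_simp
      ring
    rw [hkey]
    have : 0 < 2 / (1 + y ^ 2) ^ 2 * phi y := by
      have := phi_pos y; positivity
    linarith
  have hanti : Antitone u :=
    antitone_of_deriv_nonpos (fun y => (hu y).differentiableAt) hderiv_nonpos
  have hterm : Tendsto (fun y : ℝ => y / (1 + y ^ 2) * phi y) atTop (𝓝 0) := by
    apply tendsto_of_tendsto_of_tendsto_of_le_of_le' tendsto_const_nhds tendsto_inv_atTop_zero
    · filter_upwards [eventually_ge_atTop (1:ℝ)] with y hy
      have := phi_pos y
      positivity
    · filter_upwards [eventually_ge_atTop (1:ℝ)] with y hy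
      have hy0 : 0 < y := by linarith
      have h1 : y / (1 + y ^ 2) ≤ y⁻¹ := by
        rw [div_le_iff₀ (by positivity), inv_mul_eq_div, le_div_iff₀ hy0]
        nlinarith
      calc y / (1 + y ^ 2) * phi y ≤ y / (1 + y ^ 2) * 1 :=
            mul_le_mul_of_nonneg_left (phi_le_one y) (by positivity)
        _ = y / (1 + y ^ 2) := mul_one _
        _ ≤ y⁻¹ := h1
  have hutend : Tendsto u atTop (𝓝 0) := by
    have h1 : Tendsto (fun y => 1 - Phi y) atTop (𝓝 0) := by
      have := Phi_tendsto.const_sub 1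
      simpa using this
    have := h1.sub hterm
    simpa using this
  have hev : ∀ᶠ y in atTop, u y ≤ u x := by
    filter_upwards [eventually_ge_atTop x] with y hy
    exact hanti hy
  have := le_of_tendsto hutend hev
  simpa [hu_def] using this

lemma G_phi_tendsto : Tendsto (fun y : ℝ => G y * phi y) atTop (𝓝 0) := by
  have h2 : Tendsto (fun y : ℝ => 2 * y⁻¹) atTop (𝓝 0) := by
    have := tendsto_inv_atTop_zero (𝕜 := ℝ)
    simpa using this.const_mul 2
  apply tendsto_of_tendsto_of_tendsto_of_le_of_le' tendsto_const_nhds h2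
  · filter_upwards [eventually_ge_atTop (3:ℝ)] with y hy
    have hy0 : (0:ℝ) < y := by linarith
    have := phi_pos y
    have h1y : (0:ℝ) < 1 + y := by linarith
    unfold G
    positivity
  · filter_upwards [eventually_ge_atTop (3:ℝ)] with y hy
    have hy0 : (0:ℝ) < y := by linarith
    have h1y : (0:ℝ) < 1 + y := by linarith
    have hG : G y ≤ 2 / y := by
      unfold G
      rw [div_le_div_iff₀ (by positivity) hy0]
      nlinarith [pow_pos h1y 3, sq_nonneg y, sq_nonneg (y-1)]
    calc G y * phi y ≤ G y * 1 := by
          apply mul_le_mul_of_nonneg_left (phi_le_one y)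
          unfold G; positivity
      _ = G y := mul_one _
      _ ≤ 2 / y := hG
      _ = 2 * y⁻¹ := by ring

lemma mills_upper (x : ℝ) (hx : 0 < x) : 1 - Phi x ≤ G x * phi x := by
  set v : ℝ → ℝ := fun y => 1 - Phi y - G y * phi y with hv_def
  set Nd : ℝ → ℝ := fun y => (1 + y) ^ 3 + y * (3 * (1 + y) ^ 2 * 1) with hNd_def
  set Dd : ℝ → ℝ := fun y => 3 * (1 + y) ^ 2 * 1 * (1 + y ^ 2) + (1 + y) ^ 3 * (2 * y) with hDd_def
  have hv : ∀ y : ℝ, 0 < y → HasDerivAt v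
      (-phi y - (((Nd y * ((1 + y) ^ 3 * (1 + y ^ 2)) - (3 + y * (1 + y) ^ 3) * Dd y)
          / ((1 + y) ^ 3 * (1 + y ^ 2)) ^ 2) * phi y
        + G y * (-y * phi y))) y := by
    intro y hy
    have h1y : (0:ℝ) < 1 + y := by linarith
    have hcube : HasDerivAt (fun y : ℝ => (1 + y) ^ 3) (3 * (1 + y) ^ 2 * 1) y := by
      exact (((hasDerivAt_id y).const_add 1).pow 3)
    have hN : HasDerivAt (fun y : ℝ => 3 + y * (1 + y) ^ 3) (Nd y) y := by
      have := ((hasDerivAt_id y).mul hcube).const_add 3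
      exact this.congr_deriv (by simp only [hNd_def, id_eq]; ring)
    have hsq : HasDerivAt (fun y : ℝ => 1 + y ^ 2) (2 * y) y := by
      have := (hasDerivAt_pow 2 y).const_add 1
      exact this.congr_deriv (by simp)
    have hD : HasDerivAt (fun y : ℝ => (1 + y) ^ 3 * (1 + y ^ 2)) (Dd y) y := hcube.mul hsq
    have hDne : (1 + y) ^ 3 * (1 + y ^ 2) ≠ 0 := by positivity
    have hG : HasDerivAt G
        ((Nd y * ((1 + y) ^ 3 * (1 + y ^ 2)) - (3 + y * (1 + y) ^ 3) * Dd y)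
          / ((1 + y) ^ 3 * (1 + y ^ 2)) ^ 2) y := hN.div hD hDne
    exact ((hasDerivAt_Phi y).const_sub 1).sub (hG.mul (hasDerivAt_phi y))
  have hderiv_nonneg : ∀ y : ℝ, 0 < y → 0 ≤
      (-phi y - (((Nd y * ((1 + y) ^ 3 * (1 + y ^ 2)) - (3 + y * (1 + y) ^ 3) * Dd y)
          / ((1 + y) ^ 3 * (1 + y ^ 2)) ^ 2) * phi y
        + G y * (-y * phi y))) := by
    intro y hy
    have h1y : (0:ℝ) < 1 + y := by linarith
    have hkey : (-phi y - (((Nd y * ((1 + y) ^ 3 * (1 + y ^ 2)) - (3 + y * (1 + y) ^ 3) * Dd y)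
          / ((1 + y) ^ 3 * (1 + y ^ 2)) ^ 2) * phi y
        + G y * (-y * phi y)))
        = phi y * (y ^ 6 - 3 * y ^ 5 - 3 * y ^ 4 + 8 * y ^ 3 + 15 * y ^ 2 + 15 * y + 7)
          / ((1 + y) ^ 3 * (1 + y ^ 2)) ^ 2 := by
      rw [hNd_def, hDd_def]
      unfold G
      field_simp
      ring
    rw [hkey]
    have hP : 0 ≤ y ^ 6 - 3 * y ^ 5 - 3 * y ^ 4 + 8 * y ^ 3 + 15 * y ^ 2 + 15 * y + 7 := by
      nlinarith [sq_nonneg (y ^ 3 - 3/2 * y ^ 2 - 21/8 * y + 1/16), hy.le, sq_nonneg y]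
    have := phi_pos y
    positivity
  have hmono : MonotoneOn v (Ici x) := by
    apply monotoneOn_of_deriv_nonneg (convex_Ici x)
    · intro y hy
      exact ((hv y (lt_of_lt_of_le hx hy)).continuousAt).continuousWithinAt
    · intro y hy
      rw [interior_Ici] at hy
      exact ((hv y (hx.trans hy)).differentiableAt).differentiableWithinAt
    · intro y hy
      rw [interior_Ici] at hy
      rw [(hv y (hx.trans hy)).deriv]
      exact hderiv_nonneg y (hx.trans hy)
  have hvtend : Tendsto v atTop (𝓝 0) := by
    have h1 : Tendsto (fun y => 1 - Phi y) atTop (𝓝 0) := by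
      have := Phi_tendsto.const_sub 1
      simpa using this
    have := h1.sub G_phi_tendsto
    simpa using this
  have hev : ∀ᶠ y in atTop, v x ≤ v y := by
    filter_upwards [eventually_ge_atTop x] with y hy
    exact hmono (self_mem_Ici) hy hy
  have := ge_of_tendsto hvtend hev
  simpa [hv_def] using this

lemma sqrt_two_pi_pos : 0 < Real.sqrt (2 * Real.pi) := Real.sqrt_pos.2 (by positivity)

lemma exp_phi (x : ℝ) : Real.sqrt (2 * Real.pi) * Real.exp (x ^ 2 / 2) * phi x = 1 := by
  unfold phi
  have hs : Real.sqrt (2 * Real.pi) ≠ 0 := sqrt_two_pi_pos.ne'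
  have he : Real.exp (x ^ 2 / 2) * Real.exp (-x ^ 2 / 2) = 1 := by
    rw [← Real.exp_add]
    ring_nf
    exact Real.exp_zero
  set S := Real.sqrt (2 * Real.pi) with hS
  calc S * Real.exp (x ^ 2 / 2) * (1 / S * Real.exp (-x ^ 2 / 2))
      = (Real.exp (x ^ 2 / 2) * Real.exp (-x ^ 2 / 2)) * (S / S) := by ring
    _ = 1 := by rw [div_self hs, he, mul_one]

lemma factor_bounds (x : ℝ) (hx : 0 < x) :
    0 ≤ Real.sqrt (2 * Real.pi) * (1 + x ^ 2) * Real.exp (x ^ 2 / 2) * (1 - Phi x) - x ∧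
    Real.sqrt (2 * Real.pi) * (1 + x ^ 2) * Real.exp (x ^ 2 / 2) * (1 - Phi x) - x
      ≤ 3 / (1 + x) ^ 3 := by
  have hs := sqrt_two_pi_pos
  have hC : 0 < Real.sqrt (2 * Real.pi) * (1 + x ^ 2) * Real.exp (x ^ 2 / 2) := by positivity
  have hne : (1 + x ^ 2) ≠ 0 := by positivity
  have hkey := exp_phi x
  constructor
  · have h1 : Real.sqrt (2 * Real.pi) * (1 + x ^ 2) * Real.exp (x ^ 2 / 2)
        * (x / (1 + x ^ 2) * phi x) = x := by
      set S := Real.sqrt (2 * Real.pi)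
      set E := Real.exp (x ^ 2 / 2)
      set P := phi x
      calc S * (1 + x ^ 2) * E * (x / (1 + x ^ 2) * P)
          = x * (S * E * P) * ((1 + x ^ 2) / (1 + x ^ 2)) := by ring
        _ = x := by rw [div_self hne, hkey, mul_one, mul_one]
    have h2 := mul_le_mul_of_nonneg_left (mills_lower x) hC.le
    nlinarith [h2, h1]
  · have h1 : Real.sqrt (2 * Real.pi) * (1 + x ^ 2) * Real.exp (x ^ 2 / 2)
        * (G x * phi x) = x + 3 / (1 + x) ^ 3 := by
      unfold G
      have h1x : ((1 + x) ^ 3 : ℝ) ≠ 0 := by positivity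
      set S := Real.sqrt (2 * Real.pi)
      set E := Real.exp (x ^ 2 / 2)
      set P := phi x
      calc S * (1 + x ^ 2) * E * ((3 + x * (1 + x) ^ 3) / ((1 + x) ^ 3 * (1 + x ^ 2)) * P)
          = (S * E * P) * ((3 + x * (1 + x) ^ 3) / (1 + x) ^ 3)
              * ((1 + x ^ 2) / (1 + x ^ 2)) := by
            rw [div_mul_eq_div_div]
            ring
        _ = (3 + x * (1 + x) ^ 3) / (1 + x) ^ 3 := by
            rw [div_self hne, hkey, one_mul, mul_one]
        _ = x + 3 / (1 + x) ^ 3 := by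
            rw [add_div, mul_div_assoc, div_self h1x, mul_one, add_comm]
    have h2 := mul_le_mul_of_nonneg_left (mills_upper x hx) hC.le
    nlinarith [h2, h1]

/-- For every `z > 0`: `g_z(w) ≤ 3/(2(1 - w)³)` for `w < 0`, and
`g_z(w) ≤ 3/(1 + w)³` for `w > z`. -/
theorem gz_bounds (z : ℝ) (hz : 0 < z) :
    (∀ w : ℝ, w < 0 → gz z w ≤ 3 / (2 * (1 - w) ^ 3)) ∧
    (∀ w : ℝ, z < w → gz z w ≤ 3 / (1 + w) ^ 3) := by
  constructor
  · intro w hw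
    have hx : 0 < -w := by linarith
    unfold gz
    rw [if_neg (by linarith : ¬ z < w)]
    have hPhiw : Phi w = 1 - Phi (-w) := by
      rw [show w = -(-w) by ring, Phi_neg, neg_neg]
    have hw2 : w ^ 2 = (-w) ^ 2 := by ring
    rw [hPhiw, hw2]
    set x := -w with hxdef
    have hA := factor_bounds x hx
    have hA' : Real.sqrt (2 * Real.pi) * (1 + x ^ 2) * Real.exp (x ^ 2 / 2) * (1 - Phi x) + w
        = Real.sqrt (2 * Real.pi) * (1 + x ^ 2) * Real.exp (x ^ 2 / 2) * (1 - Phi x) - x := by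
      rw [hxdef]; ring
    rw [hA']
    have hz1 : 1 - Phi z ≤ 1/2 := by have := Phi_half z hz; linarith
    have hz0 : 0 ≤ 1 - Phi z := by have := Phi_le_one z; linarith
    have hb : 0 ≤ 3 / (1 + x) ^ 3 := by positivity
    calc (Real.sqrt (2 * Real.pi) * (1 + x ^ 2) * Real.exp (x ^ 2 / 2) * (1 - Phi x) - x)
          * (1 - Phi z) ≤ 3 / (1 + x) ^ 3 * (1/2) :=
          mul_le_mul hA.2 hz1 hz0 hb
      _ = 3 / (2 * (1 - w) ^ 3) := by
          rw [show (1:ℝ) - w = 1 + x by rw [hxdef]; ring]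
          have h1x : ((1 + x) ^ 3 : ℝ) ≠ 0 := by positivity
          field_simp
  · intro w hw
    have hx : 0 < w := hz.trans hw
    unfold gz
    rw [if_pos hw]
    have hA := factor_bounds w hx
    calc (Real.sqrt (2 * Real.pi) * (1 + w ^ 2) * Real.exp (w ^ 2 / 2) * (1 - Phi w) - w)
          * Phi z
        ≤ (Real.sqrt (2 * Real.pi) * (1 + w ^ 2) * Real.exp (w ^ 2 / 2) * (1 - Phi w) - w) * 1 :=
          mul_le_mul_of_nonneg_left (Phi_le_one z) hA.1
      _ ≤ 3 / (1 + w) ^ 3 := by rw [mul_one]; exact hA.2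
end
end

section
/- Let (x_1, …, x_N) be the unique strictly decreasing zero-mean solution of the MIW recursion and let P_N be its empirical distribution. Then the Wasserstein distance to the standard normal distribution satisfies d_W(P_N, γ) ≤ 16·√(log N)/N. -/
open MeasureTheory

noncomputable section

/-- Partial sums `S_n = x_1 + ⋯ + x_n`. -/
def Ssum (x : ℕ → ℝ) (n : ℕ) : ℝ := ∑ i ∈ Finset.Icc 1 n, x i

/-- `x` is a solution of the MIW recursion
`x_{n+1} = x_n - 1/(x_1 + ⋯ + x_n)` for `1 ≤ n ≤ N - 1`. -/
def IsMIW (N : ℕ) (x : ℕ → ℝ) : Prop :=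
  ∀ n, 1 ≤ n → n ≤ N - 1 → Ssum x n ≠ 0 ∧ x (n + 1) = x n - 1 / Ssum x n

/-- The empirical distribution `P_N(A) = #{n : x_n ∈ A} / N` of `x_1, …, x_N`. -/
def empDist (N : ℕ) (x : ℕ → ℝ) : Measure ℝ :=
  (N : ENNReal)⁻¹ • ∑ n ∈ Finset.Icc 1 N, Measure.dirac (x n)

open Real Set Filter intervalIntegral
open scoped ENNReal NNReal

namespace MIWAux

def phi (t : ℝ) : ℝ := rexp (-(1/2) * t^2)

lemma phi_pos (t : ℝ) : 0 < phi t := exp_pos _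
lemma continuous_phi : Continuous phi := by
  unfold phi; fun_prop

lemma exp_mul_phi (w : ℝ) : rexp (w^2/2) * phi w = 1 := by
  rw [phi, ← Real.exp_add]; ring_nf; exact Real.exp_zero

lemma integrable_phi : Integrable phi := integrable_exp_neg_mul_sq (by norm_num)

lemma integrable_mul_phi : Integrable (fun t => t * phi t) :=
  integrable_mul_exp_neg_mul_sq (by norm_num)

lemma integrable_abs_phi : Integrable (fun t => |t| * phi t) := by
  have := integrable_mul_phi.abs
  refine this.congr ?_
  filter_upwards with t
  rw [abs_mul, abs_of_pos (phi_pos t)]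

lemma integrable_mul_phi_of_le {G : ℝ → ℝ} (hG : Continuous G) (a b : ℝ)
    (hbd : ∀ t, |G t| ≤ a + b * |t|) : Integrable (fun t => G t * phi t) := by
  refine Integrable.mono' ((integrable_phi.const_mul a).add (integrable_abs_phi.const_mul b))
    ((hG.mul continuous_phi).aestronglyMeasurable) ?_
  filter_upwards with t
  have h1 : ‖G t * phi t‖ = |G t| * phi t := by
    rw [norm_mul, Real.norm_eq_abs, Real.norm_eq_abs, abs_of_pos (phi_pos t)]
  rw [h1]
  have := mul_le_mul_of_nonneg_right (hbd t) (phi_pos t).le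
  calc |G t| * phi t ≤ (a + b * |t|) * phi t := this
    _ = a * phi t + b * (|t| * phi t) := by ring

lemma phi_tendsto : Tendsto phi atTop (nhds 0) := by
  have h1 : Tendsto (fun t : ℝ => -(1/2) * t^2) atTop atBot := by
    apply Tendsto.const_mul_atTop_of_neg (by norm_num)
    exact tendsto_pow_atTop two_ne_zero
  exact Real.tendsto_exp_atBot.comp h1

def Q (w : ℝ) : ℝ := ∫ t in Ioi w, phi t

lemma Q_nonneg (w : ℝ) : 0 ≤ Q w :=
  setIntegral_nonneg measurableSet_Ioi (fun t _ => (phi_pos t).le)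

lemma hasDerivAt_neg_phi (t : ℝ) : HasDerivAt (fun s => -phi s) (t * phi t) t := by
  have h1 : HasDerivAt (fun s : ℝ => -(1/2) * s^2) (-(1/2) * (2*t)) t := by
    have := ((hasDerivAt_pow 2 t).const_mul (-(1/2)))
    exact this.congr_deriv (by ring)
  have h2 := (Real.hasDerivAt_exp (-(1/2) * t^2)).comp t h1
  have := h2.neg
  refine this.congr_deriv (Eq.symm ?_)
  show t * phi t = -(rexp (-(1/2) * t^2) * (-(1/2) * (2*t)))
  rw [phi]; ring

lemma integral_Ioi_mul_phi (w : ℝ) : ∫ t in Ioi w, t * phi t = phi w := by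
  have := integral_Ioi_of_hasDerivAt_of_tendsto (f := fun s => -phi s)
    (f' := fun t => t * phi t) (a := w) (m := 0)
    (by exact ((continuous_phi.neg).continuousAt).continuousWithinAt)
    (fun x _ => hasDerivAt_neg_phi x)
    (integrable_mul_phi.integrableOn)
    (by simpa using phi_tendsto.neg)
  simpa using this

lemma Q_le (w : ℝ) (hw : 0 < w) : Q w ≤ phi w / w := by
  have h1 : Q w ≤ ∫ t in Ioi w, (1/w) * (t * phi t) := by
    apply setIntegral_mono_on integrable_phi.integrableOn
      ((integrable_mul_phi.const_mul (1/w)).integrableOn) measurableSet_Ioi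
    intro t ht
    have htw : w < t := ht
    have : phi t * 1 ≤ phi t * (t / w) := by
      apply mul_le_mul_of_nonneg_left _ (phi_pos t).le
      rw [le_div_iff₀ hw]; linarith
    calc phi t = phi t * 1 := by ring
      _ ≤ phi t * (t / w) := this
      _ = 1/w * (t * phi t) := by ring
  rw [MeasureTheory.integral_const_mul, integral_Ioi_mul_phi] at h1
  calc Q w ≤ 1/w * phi w := h1
    _ = phi w / w := by ring

lemma Q_ge (w : ℝ) (hw : 0 ≤ w) : w * phi w / (1 + w^2) ≤ Q w := by
  -- F t = -(t * phi t)/(1+t^2), F' t = phi t * (t^4+2t^2-1)/(1+t^2)^2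
  set F : ℝ → ℝ := fun t => -(t * phi t) / (1 + t^2) with hF
  have hderiv : ∀ t : ℝ, HasDerivAt F
      (phi t * ((t^4 + 2*t^2 - 1)/(1+t^2)^2)) t := by
    intro t
    have h0 : (1 : ℝ) + t^2 ≠ 0 := by positivity
    have h1 : HasDerivAt (fun s : ℝ => -(s * phi s)) (-(phi t + t * (t * phi t) * (-1))) t := by
      have hphi : HasDerivAt phi (-(t * phi t)) t := by
        have := (hasDerivAt_neg_phi t).neg
        simpa [Pi.neg_def] using this
      have := ((hasDerivAt_id t).mul hphi).neg
      refine this.congr_deriv (Eq.symm ?_)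
      simp only [id_eq, one_mul]
      ring
    have h2 : HasDerivAt (fun s : ℝ => 1 + s^2) (2*t) t := by
      simpa using ((hasDerivAt_pow 2 t).const_add 1)
    have h3 := h1.div h2 h0
    refine h3.congr_deriv (Eq.symm ?_)
    field_simp
    ring
  have htend : Tendsto F atTop (nhds 0) := by
    apply tendsto_of_tendsto_of_tendsto_of_le_of_le' (by simpa using phi_tendsto.neg) phi_tendsto
    · filter_upwards [eventually_ge_atTop (0:ℝ)] with t ht
      show -phi t ≤ -(t * phi t) / (1 + t ^ 2)
      have h0 : (0:ℝ) < 1 + t^2 := by positivity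
      rw [neg_div, neg_le_neg_iff, div_le_iff₀ h0]
      have hp := phi_pos t
      calc t * phi t ≤ (1+t^2) * phi t := by
            nlinarith [mul_nonneg (mul_self_nonneg (t-1)) hp.le, mul_nonneg ht hp.le]
        _ = phi t * (1 + t^2) := by ring
    · filter_upwards [eventually_ge_atTop (0:ℝ)] with t ht
      show -(t * phi t) / (1 + t ^ 2) ≤ phi t
      have h0 : (0:ℝ) < 1 + t^2 := by positivity
      have h2 : 0 ≤ t * phi t := mul_nonneg ht (phi_pos t).le
      have h3 : -(t * phi t)/(1+t^2) ≤ 0 := by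
        apply div_nonpos_of_nonpos_of_nonneg <;> linarith
      linarith [phi_pos t]
  have hint : IntegrableOn (fun t => phi t * ((t^4 + 2*t^2 - 1)/(1+t^2)^2)) (Ioi w) := by
    have : Integrable (fun t => ((t^4 + 2*t^2 - 1)/(1+t^2)^2) * phi t) := by
      apply integrable_mul_phi_of_le (by
        apply Continuous.div (by continuity) (by continuity)
        intro x; positivity) 1 0
      intro t
      have h0 : (0:ℝ) < (1 + t^2)^2 := by positivity
      rw [abs_div, abs_of_pos h0, div_le_iff₀ h0]
      rw [abs_le]
      constructor <;> nlinarith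
    exact (this.congr (by filter_upwards with t; ring)).integrableOn
  have key := integral_Ioi_of_hasDerivAt_of_tendsto (f := F)
    (f' := fun t => phi t * ((t^4 + 2*t^2 - 1)/(1+t^2)^2)) (a := w) (m := 0)
    ((hderiv w).continuousAt.continuousWithinAt) (fun x _ => hderiv x) hint htend
  have hle : ∫ t in Ioi w, phi t * ((t^4 + 2*t^2 - 1)/(1+t^2)^2) ≤ Q w := by
    apply setIntegral_mono_on hint integrable_phi.integrableOn measurableSet_Ioi
    intro t _
    have h0 : (0:ℝ) < (1 + t^2)^2 := by positivity
    calc phi t * ((t^4 + 2*t^2 - 1)/(1+t^2)^2) ≤ phi t * 1 := by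
          apply mul_le_mul_of_nonneg_left _ (phi_pos t).le
          rw [div_le_one h0]; nlinarith
      _ = phi t := by ring
  rw [key] at hle
  have : 0 - F w = w * phi w / (1 + w^2) := by rw [hF]; field_simp; ring
  linarith [hle, this.symm.le, this.ge]

lemma integral_phi : ∫ t, phi t = Real.sqrt (2*π) := by
  have := integral_gaussian (1/2)
  rw [show π / (1/2) = 2*π by ring] at this
  exact this

lemma Q_zero : Q 0 = Real.sqrt (2*π) / 2 := by
  have := integral_gaussian_Ioi (1/2)
  rw [show π / (1/2) = 2*π by ring] at this
  exact this

lemma hasDerivAt_Iic_integral {G : ℝ → ℝ} (hG : Continuous G) (hInt : Integrable G) (w : ℝ) :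
    HasDerivAt (fun s => ∫ t in Iic s, G t) (G w) w := by
  have key : (fun s => ∫ t in Iic s, G t)
      = fun s => (∫ t in Iic (0:ℝ), G t) + ∫ t in (0:ℝ)..s, G t := by
    funext s
    rw [← integral_Iic_sub_Iic hInt.integrableOn hInt.integrableOn]
    ring
  rw [key]
  have := intervalIntegral.integral_hasDerivAt_right (a := 0) (b := w)
    (hInt.intervalIntegrable) (hG.stronglyMeasurable.stronglyMeasurableAtFilter)
    hG.continuousAt
  exact this.const_add _

lemma Q_eq (w : ℝ) : Q w = (∫ t, phi t) - ∫ t in Iic w, phi t := by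
  unfold Q
  rw [← integral_Iic_add_Ioi (b := w) integrable_phi.integrableOn integrable_phi.integrableOn]
  ring

lemma hasDerivAt_Q (w : ℝ) : HasDerivAt Q (-(phi w)) w := by
  have : Q = fun s => (∫ t, phi t) - ∫ t in Iic s, phi t := funext Q_eq
  rw [this]
  simpa using (hasDerivAt_Iic_integral continuous_phi integrable_phi w).const_sub _

def E (w : ℝ) : ℝ := rexp (w^2/2) * Q w

lemma hasDerivAt_E (w : ℝ) : HasDerivAt E (w * E w - 1) w := by
  have h1 : HasDerivAt (fun s : ℝ => rexp (s^2/2)) (w * rexp (w^2/2)) w := by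
    have hin : HasDerivAt (fun s : ℝ => s^2/2) w w := by
      have := (hasDerivAt_pow 2 w).div_const 2
      exact this.congr_deriv (by ring)
    have := (Real.hasDerivAt_exp (w^2/2)).comp w hin
    exact this.congr_deriv (by ring)
  have := h1.mul (hasDerivAt_Q w)
  refine this.congr_deriv (Eq.symm ?_)
  show w * E w - 1 = w * rexp (w ^ 2 / 2) * Q w + rexp (w ^ 2 / 2) * -phi w
  have := exp_mul_phi w
  rw [E]; nlinarith [this]

lemma wE_le_one (w : ℝ) (hw : 0 ≤ w) : w * E w ≤ 1 := by
  rcases eq_or_lt_of_le hw with h|h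
  · rw [← h]; norm_num
  · have h1 := Q_le w h
    calc w * E w = w * (rexp (w^2/2) * Q w) := rfl
      _ ≤ w * (rexp (w^2/2) * (phi w / w)) :=
          mul_le_mul_of_nonneg_left
            (mul_le_mul_of_nonneg_left h1 (exp_pos _).le) h.le
      _ = rexp (w^2/2) * phi w := by field_simp
      _ = 1 := exp_mul_phi w

lemma E_ge (w : ℝ) (hw : 0 ≤ w) : w / (1 + w^2) ≤ E w := by
  have h1 := Q_ge w hw
  have h2 : rexp (w^2/2) * (w * phi w / (1 + w^2)) ≤ E w := by
    rw [E]
    exact mul_le_mul_of_nonneg_left h1 (exp_pos _).le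
  have h3 : rexp (w^2/2) * (w * phi w / (1 + w^2)) = w / (1+w^2) := by
    have := exp_mul_phi w
    field_simp
    nlinarith [this]
  linarith [h2, h3.symm.le, h3.le]

lemma E_nonneg (w : ℝ) : 0 ≤ E w := mul_nonneg (exp_pos _).le (Q_nonneg w)

lemma E_antitone : AntitoneOn E (Ici 0) := by
  apply antitoneOn_of_deriv_nonpos (convex_Ici 0)
  · exact fun w _ => ((hasDerivAt_E w).continuousAt).continuousWithinAt
  · intro w hw
    exact ((hasDerivAt_E w).differentiableAt).differentiableWithinAt
  · intro w hw
    rw [interior_Ici] at hw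
    rw [(hasDerivAt_E w).deriv]
    have := wE_le_one w (le_of_lt hw)
    linarith

lemma E_zero_le : E 0 ≤ 63/50 := by
  have h0 : E 0 = Real.sqrt (2*π)/2 := by rw [E, Q_zero]; simp
  rw [h0]
  have h1 : Real.sqrt (2*π) ≤ 2.52 := by
    rw [show (2.52:ℝ) = Real.sqrt (2.52^2) by rw [Real.sqrt_sq]; norm_num]
    apply Real.sqrt_le_sqrt
    nlinarith [Real.pi_lt_d2]
  linarith

lemma sqrt_two_pi_ge_two : 2 ≤ Real.sqrt (2*π) := by
  have h2 : (2:ℝ) = Real.sqrt 4 := by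
    rw [show (4:ℝ) = 2^2 by norm_num, Real.sqrt_sq]; norm_num
  calc (2:ℝ) = Real.sqrt 4 := h2
    _ ≤ Real.sqrt (2*π) := Real.sqrt_le_sqrt (by nlinarith [Real.pi_gt_three])

/-! ### Gaussian measure conversion -/

open ProbabilityTheory

def gmeas : Measure ℝ := gaussianReal 0 1

instance : IsProbabilityMeasure gmeas := by
  unfold gmeas; infer_instance

lemma pdf_eq (x : ℝ) : gaussianPDFReal 0 1 x = (Real.sqrt (2*π))⁻¹ * phi x := by
  rw [gaussianPDFReal, phi]
  norm_num
  left
  ring_nf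

lemma integral_gmeas (g : ℝ → ℝ) :
    ∫ w, g w ∂gmeas = (Real.sqrt (2*π))⁻¹ * ∫ t, g t * phi t := by
  rw [gmeas, gaussianReal_of_var_ne_zero 0 one_ne_zero]
  have hmeas : Measurable (fun x => (gaussianPDFReal 0 1 x).toNNReal) :=
    (measurable_gaussianPDFReal 0 1).real_toNNReal
  have hd : gaussianPDF 0 1 = fun x => ((gaussianPDFReal 0 1 x).toNNReal : ℝ≥0∞) := by
    funext x
    rw [gaussianPDF, ENNReal.ofReal]
  rw [hd, integral_withDensity_eq_integral_smul hmeas]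
  rw [← MeasureTheory.integral_const_mul]
  congr 1
  funext x
  rw [NNReal.smul_def, smul_eq_mul, Real.coe_toNNReal _ (gaussianPDFReal_nonneg 0 1 x), pdf_eq]
  ring

lemma integrable_gmeas {g : ℝ → ℝ} (hg : Continuous g) (a b : ℝ)
    (hbd : ∀ t, |g t| ≤ a + b * |t|) : Integrable g gmeas := by
  rw [gmeas, gaussianReal_of_var_ne_zero 0 one_ne_zero]
  have hmeas : Measurable (fun x => (gaussianPDFReal 0 1 x).toNNReal) :=
    (measurable_gaussianPDFReal 0 1).real_toNNReal
  have hd : gaussianPDF 0 1 = fun x => ((gaussianPDFReal 0 1 x).toNNReal : ℝ≥0∞) := by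
    funext x
    rw [gaussianPDF, ENNReal.ofReal]
  rw [hd, integrable_withDensity_iff_integrable_smul hmeas]
  have : Integrable (fun t : ℝ => (Real.sqrt (2*π))⁻¹ * ((g t) * phi t)) :=
    (integrable_mul_phi_of_le hg a b hbd).const_mul _
  refine this.congr ?_
  filter_upwards with t
  rw [NNReal.smul_def, smul_eq_mul, Real.coe_toNNReal _ (gaussianPDFReal_nonneg 0 1 t), pdf_eq]
  ring

lemma integral_abs_gmeas_le : ∫ t, |t| ∂gmeas ≤ 1 := by
  rw [integral_gmeas]
  have h1 : ∫ t, |t| * phi t = 2 := by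
    have hsplit : ∫ t, |t| * phi t
        = (∫ t in Iic (0:ℝ), |t| * phi t) + ∫ t in Ioi (0:ℝ), |t| * phi t :=
      (integral_Iic_add_Ioi integrable_abs_phi.integrableOn
        integrable_abs_phi.integrableOn).symm
    have hpos : ∫ t in Ioi (0:ℝ), |t| * phi t = 1 := by
      have : ∫ t in Ioi (0:ℝ), |t| * phi t = ∫ t in Ioi (0:ℝ), t * phi t := by
        apply setIntegral_congr_fun measurableSet_Ioi
        intro t ht
        dsimp only
        rw [abs_of_pos ht]
      rw [this, integral_Ioi_mul_phi]
      simp [phi]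
    have hneg : ∫ t in Iic (0:ℝ), |t| * phi t = 1 := by
      have heven : ∀ t : ℝ, |(-t)| * phi (-t) = |t| * phi t := by
        intro t; rw [abs_neg, phi, phi]; ring_nf
      have : ∫ t in Iic (0:ℝ), |t| * phi t = ∫ t in Iic (0:ℝ), |(-t)| * phi (-t) := by
        congr 1; funext t; rw [heven]
      rw [this, integral_comp_neg_Iic 0 (fun t => |t| * phi t), neg_zero]
      exact hpos
    rw [hsplit, hpos, hneg]; norm_num
  rw [h1]
  have h2 := sqrt_two_pi_ge_two
  have h3 : (0:ℝ) < Real.sqrt (2*π) := by linarith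
  rw [inv_mul_le_iff₀ h3]
  linarith

/-! ### The Stein solution -/

def muG (h : ℝ → ℝ) : ℝ := ∫ w, h w ∂gmeas
def hh (h : ℝ → ℝ) (t : ℝ) : ℝ := h t - muG h
def steinT (h : ℝ → ℝ) (w : ℝ) : ℝ := ∫ t in Iic w, hh h t * phi t
def steinF (h : ℝ → ℝ) (w : ℝ) : ℝ := rexp (w^2/2) * steinT h w
def steinF' (h : ℝ → ℝ) (w : ℝ) : ℝ := w * steinF h w + hh h w
def steinG (h : ℝ → ℝ) (w : ℝ) : ℝ := w * steinF h w
def steinG' (h : ℝ → ℝ) (w : ℝ) : ℝ := (1 + w^2) * steinF h w + w * hh h w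

section SteinBounds

variable {h : ℝ → ℝ} (hL : LipschitzWith 1 h)
include hL

lemma lip_abs (a b : ℝ) : |h a - h b| ≤ |a - b| := by
  have := hL.dist_le_mul a b
  simpa [Real.dist_eq] using this

lemma h_cont : Continuous h := hL.continuous

lemma h_bd (t : ℝ) : |h t| ≤ |h 0| + |t| := by
  have := lip_abs hL t 0
  simp only [sub_zero] at this
  calc |h t| = |h 0 + (h t - h 0)| := by ring_nf
    _ ≤ |h 0| + |h t - h 0| := abs_add_le _ _
    _ ≤ |h 0| + |t| := by linarith

lemma hh_cont : Continuous (hh h) := (h_cont hL).sub continuous_const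

lemma hh_bd (t : ℝ) : |hh h t| ≤ (|h 0| + |muG h|) + |t| := by
  rw [hh]
  calc |h t - muG h| ≤ |h t| + |muG h| := abs_sub _ _
    _ ≤ (|h 0| + |t|) + |muG h| := by linarith [h_bd hL t]
    _ = (|h 0| + |muG h|) + |t| := by ring

lemma integrable_hh_phi : Integrable (fun t => hh h t * phi t) :=
  integrable_mul_phi_of_le (hh_cont hL) _ 1 (by simpa using hh_bd hL)

lemma hh_abs_le (w : ℝ) : |hh h w| ≤ |w| + 1 := by
  have hInth : Integrable h gmeas :=
    integrable_gmeas (h_cont hL) (|h 0|) 1 (by simpa using h_bd hL)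
  have hIntc : Integrable (fun _ : ℝ => h w) gmeas := integrable_const _
  have hIntabs : Integrable (fun t : ℝ => |t|) gmeas :=
    integrable_gmeas (by continuity) 0 1 (by simp [abs_abs])
  have key : hh h w = ∫ t, (h w - h t) ∂gmeas := by
    rw [integral_sub hIntc hInth, MeasureTheory.integral_const]
    simp [hh, muG]
  rw [key]
  have h2 : |∫ t, (h w - h t) ∂gmeas| ≤ ∫ t, |h w - h t| ∂gmeas := by
    simpa using norm_integral_le_integral_norm (μ := gmeas) (fun t => h w - h t)
  have h3 : ∫ t, |h w - h t| ∂gmeas ≤ ∫ t, (|w| + |t|) ∂gmeas := by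
    apply integral_mono (hIntc.sub hInth).abs
      ((integrable_const (|w|)).add hIntabs)
    intro t
    calc |h w - h t| ≤ |w - t| := lip_abs hL w t
      _ ≤ |w| + |t| := abs_sub _ _
  have h4 : ∫ t, (|w| + |t|) ∂gmeas = |w| + ∫ t, |t| ∂gmeas := by
    rw [integral_add (integrable_const _) hIntabs, MeasureTheory.integral_const]
    simp
  have h5 := integral_abs_gmeas_le
  linarith

lemma total_zero : ∫ t, hh h t * phi t = 0 := by
  have hInthphi : Integrable (fun t => h t * phi t) :=
    integrable_mul_phi_of_le (h_cont hL) (|h 0|) 1 (by simpa using h_bd hL)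
  have h1 : ∫ t, hh h t * phi t = (∫ t, h t * phi t) - muG h * ∫ t, phi t := by
    rw [← MeasureTheory.integral_const_mul, ← integral_sub hInthphi
      (integrable_phi.const_mul _)]
    congr 1; funext t; rw [hh]; ring
  rw [h1, integral_phi]
  have h2 : muG h = (Real.sqrt (2*π))⁻¹ * ∫ t, h t * phi t := integral_gmeas h
  have h3 : (0:ℝ) < Real.sqrt (2*π) := by linarith [sqrt_two_pi_ge_two]
  rw [h2]
  field_simp
  ring

lemma T_add_Ioi (w : ℝ) : steinT h w + ∫ t in Ioi w, hh h t * phi t = 0 := by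
  rw [steinT, integral_Iic_add_Ioi (integrable_hh_phi hL).integrableOn
    (integrable_hh_phi hL).integrableOn, total_zero hL]

omit hL in
lemma hasDerivAt_exp_sq (w : ℝ) :
    HasDerivAt (fun s : ℝ => rexp (s^2/2)) (w * rexp (w^2/2)) w := by
  have hin : HasDerivAt (fun s : ℝ => s^2/2) w w := by
    have := (hasDerivAt_pow 2 w).div_const 2
    exact this.congr_deriv (by ring)
  have := (Real.hasDerivAt_exp (w^2/2)).comp w hin
  exact this.congr_deriv (by ring)

lemma hasDerivAt_T (w : ℝ) : HasDerivAt (steinT h) (hh h w * phi w) w :=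
  hasDerivAt_Iic_integral ((hh_cont hL).mul continuous_phi) (integrable_hh_phi hL) w

lemma hasDerivAt_F (w : ℝ) : HasDerivAt (steinF h) (steinF' h w) w := by
  have := (hasDerivAt_exp_sq w).mul (hasDerivAt_T hL w)
  refine this.congr_deriv (Eq.symm ?_)
  rw [steinF', steinF]
  have he := exp_mul_phi w
  calc w * (rexp (w^2/2) * steinT h w) + hh h w
      = w * rexp (w^2/2) * steinT h w + hh h w * (rexp (w^2/2) * phi w) := by rw [he]; ring
    _ = w * rexp (w ^ 2 / 2) * steinT h w + rexp (w ^ 2 / 2) * (hh h w * phi w) := by ring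

lemma hasDerivAt_G (w : ℝ) : HasDerivAt (steinG h) (steinG' h w) w := by
  have := (hasDerivAt_id w).mul (hasDerivAt_F hL w)
  refine this.congr_deriv (Eq.symm ?_)
  rw [steinG', steinF', id]
  ring

lemma integrableOn_diff_phi (w : ℝ) :
    Integrable (fun t => (hh h t - hh h w) * phi t) := by
  refine ((integrable_hh_phi hL).sub (integrable_phi.const_mul (hh h w))).congr ?_
  filter_upwards with t
  show hh h t * phi t - hh h w * phi t = (hh h t - hh h w) * phi t
  ring

lemma Ioi_split (w : ℝ) : ∫ t in Ioi w, hh h t * phi t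
    = hh h w * Q w + ∫ t in Ioi w, (hh h t - hh h w) * phi t := by
  have h1 : ∫ t in Ioi w, hh h t * phi t
      = ∫ t in Ioi w, (hh h w * phi t + (hh h t - hh h w) * phi t) := by
    congr 1; funext t; ring
  rw [h1, integral_add ((integrable_phi.const_mul _).integrableOn)
    ((integrableOn_diff_phi hL w).integrableOn), MeasureTheory.integral_const_mul]
  rfl

lemma rho_abs (w : ℝ) : |∫ t in Ioi w, (hh h t - hh h w) * phi t| ≤ phi w - w * Q w := by
  have habs : |∫ t in Ioi w, (hh h t - hh h w) * phi t|
      ≤ ∫ t in Ioi w, |(hh h t - hh h w) * phi t| := by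
    have := norm_integral_le_integral_norm (μ := volume.restrict (Ioi w))
      (fun t => (hh h t - hh h w) * phi t)
    simpa [abs_mul] using this
  have hmono : ∫ t in Ioi w, |(hh h t - hh h w) * phi t|
      ≤ ∫ t in Ioi w, (t - w) * phi t := by
    apply setIntegral_mono_on ((integrableOn_diff_phi hL w).abs.integrableOn)
      ((integrable_mul_phi_of_le (by continuity) (|w|) 1
        (fun t => (abs_sub t w).trans (by simp [add_comm]))).integrableOn)
      measurableSet_Ioi
    intro t ht
    have hwt : w < t := ht
    rw [abs_mul, abs_of_pos (phi_pos t)]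
    apply mul_le_mul_of_nonneg_right _ (phi_pos t).le
    have : hh h t - hh h w = h t - h w := by rw [hh, hh]; ring
    rw [this]
    calc |h t - h w| ≤ |t - w| := lip_abs hL t w
      _ = t - w := abs_of_pos (by linarith)
  have hval : ∫ t in Ioi w, (t - w) * phi t = phi w - w * Q w := by
    have h1 : ∫ t in Ioi w, (t - w) * phi t
        = ∫ t in Ioi w, (t * phi t - w * phi t) := by congr 1; funext t; ring
    rw [h1, integral_sub (integrable_mul_phi.integrableOn)
      ((integrable_phi.const_mul w).integrableOn), integral_Ioi_mul_phi,
      MeasureTheory.integral_const_mul]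
    rfl
  linarith

lemma steinT_eq (w : ℝ) :
    steinT h w = -(hh h w * Q w + ∫ t in Ioi w, (hh h t - hh h w) * phi t) := by
  have h1 := T_add_Ioi hL w
  rw [Ioi_split hL w] at h1
  linarith

omit hL in
lemma one_sub_wE_bounds (w : ℝ) (hw : 0 ≤ w) :
    0 ≤ 1 - w * E w ∧ 1 - w * E w ≤ 1/(1+w^2) := by
  have hden : (0:ℝ) < 1 + w^2 := by positivity
  constructor
  · linarith [wE_le_one w hw]
  · have h1 : w * (w/(1+w^2)) ≤ w * E w := mul_le_mul_of_nonneg_left (E_ge w hw) hw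
    have h2 : w * (w/(1+w^2)) = w^2/(1+w^2) := by ring
    have h3 : 1 - w^2/(1+w^2) = 1/(1+w^2) := by field_simp; ring
    rw [h2] at h1
    linarith

omit hL in
lemma exp_diff_eq (w : ℝ) : rexp (w^2/2) * (phi w - w * Q w) = 1 - w * E w := by
  calc rexp (w^2/2) * (phi w - w * Q w)
      = rexp (w^2/2) * phi w - w * (rexp (w^2/2) * Q w) := by ring
    _ = 1 - w * E w := by rw [exp_mul_phi, E]

lemma bound_F'_nonneg (w : ℝ) (hw : 0 ≤ w) : |steinF' h w| ≤ 2 := by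
  set ρ := ∫ t in Ioi w, (hh h t - hh h w) * phi t with hρ
  have key : steinF' h w = hh h w * (1 - w * E w) - w * (rexp (w^2/2) * ρ) := by
    rw [steinF', steinF, steinT_eq hL w, E, ← hρ]; ring
  have h1 : |ρ| ≤ phi w - w * Q w := rho_abs hL w
  obtain ⟨hlow, hup⟩ := one_sub_wE_bounds w hw
  have hhb : |hh h w| ≤ w + 1 := by
    have := hh_abs_le hL w; rwa [abs_of_nonneg hw] at this
  have hexp : (0:ℝ) < rexp (w^2/2) := exp_pos _
  have e1 : |hh h w * (1 - w * E w)| ≤ (w+1) * (1 - w*E w) := by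
    rw [abs_mul, abs_of_nonneg hlow]
    exact mul_le_mul_of_nonneg_right hhb hlow
  have e2 : |w * (rexp (w^2/2) * ρ)| ≤ w * (1 - w*E w) := by
    rw [abs_mul, abs_mul, abs_of_nonneg hw, abs_of_pos hexp]
    calc w * (rexp (w^2/2) * |ρ|) ≤ w * (rexp (w^2/2) * (phi w - w * Q w)) := by
          apply mul_le_mul_of_nonneg_left _ hw
          exact mul_le_mul_of_nonneg_left h1 hexp.le
      _ = w * (1 - w * E w) := by rw [exp_diff_eq]
  have habs : |steinF' h w| ≤ (2*w+1) * (1 - w*E w) := by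
    rw [key]
    calc |hh h w * (1 - w * E w) - w * (rexp (w^2/2) * ρ)|
        ≤ |hh h w * (1 - w * E w)| + |w * (rexp (w^2/2) * ρ)| := abs_sub _ _
      _ ≤ (w+1) * (1 - w*E w) + w * (1 - w*E w) := by linarith
      _ = (2*w+1) * (1 - w*E w) := by ring
  have hden : (0:ℝ) < 1 + w^2 := by positivity
  have hfin : (2*w+1) * (1 - w*E w) ≤ (2*w+1) / (1+w^2) := by
    calc (2*w+1) * (1 - w*E w) ≤ (2*w+1) * (1/(1+w^2)) :=
          mul_le_mul_of_nonneg_left hup (by linarith)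
      _ = (2*w+1)/(1+w^2) := by ring
  have hfin2 : (2*w+1)/(1+w^2) ≤ 2 := by
    rw [div_le_iff₀ hden]
    nlinarith [sq_nonneg (2*w - 1)]
  linarith

lemma bound_G'_nonneg (w : ℝ) (hw : 0 ≤ w) : |steinG' h w| ≤ 17/4 := by
  set ρ := ∫ t in Ioi w, (hh h t - hh h w) * phi t with hρ
  have key : steinG' h w
      = -(hh h w * ((1+w^2) * E w - w)) - (1+w^2) * (rexp (w^2/2) * ρ) := by
    rw [steinG', steinF, steinT_eq hL w, E, ← hρ]; ring
  have h1 : |ρ| ≤ phi w - w * Q w := rho_abs hL w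
  obtain ⟨hlow, hup⟩ := one_sub_wE_bounds w hw
  have hhb : |hh h w| ≤ w + 1 := by
    have := hh_abs_le hL w; rwa [abs_of_nonneg hw] at this
  have hexp : (0:ℝ) < rexp (w^2/2) := exp_pos _
  have hden : (0:ℝ) < 1 + w^2 := by positivity
  set u := (1+w^2) * E w - w with hu
  clear_value u
  have hu0 : 0 ≤ u := by
    have h2 : w/(1+w^2) ≤ E w := E_ge w hw
    have h3 : (1+w^2) * (w/(1+w^2)) ≤ (1+w^2) * E w :=
      mul_le_mul_of_nonneg_left h2 hden.le
    have h4 : (1+w^2) * (w/(1+w^2)) = w := by field_simp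
    rw [h4] at h3
    rw [hu]; linarith
  have e1 : |hh h w * u| ≤ (w+1) * u := by
    rw [abs_mul, abs_of_nonneg hu0]
    exact mul_le_mul_of_nonneg_right hhb hu0
  have e2 : |(1+w^2) * (rexp (w^2/2) * ρ)| ≤ 1 := by
    rw [abs_mul, abs_mul, abs_of_pos hden, abs_of_pos hexp]
    calc (1+w^2) * (rexp (w^2/2) * |ρ|)
        ≤ (1+w^2) * (rexp (w^2/2) * (phi w - w * Q w)) := by
          apply mul_le_mul_of_nonneg_left _ hden.le
          exact mul_le_mul_of_nonneg_left h1 hexp.le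
      _ = (1+w^2) * (1 - w * E w) := by rw [exp_diff_eq]
      _ ≤ (1+w^2) * (1/(1+w^2)) := mul_le_mul_of_nonneg_left hup hden.le
      _ = 1 := by field_simp
  have habs : |steinG' h w| ≤ (w+1) * u + 1 := by
    rw [key]
    calc |(-(hh h w * u)) - (1+w^2) * (rexp (w^2/2) * ρ)|
        ≤ |(-(hh h w * u))| + |(1+w^2) * (rexp (w^2/2) * ρ)| := abs_sub _ _
      _ = |hh h w * u| + |(1+w^2) * (rexp (w^2/2) * ρ)| := by rw [abs_neg]
      _ ≤ (w+1) * u + 1 := by linarith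
  rcases le_or_gt w 1 with hcase | hcase
  · -- w ∈ [0,1]
    have hE0 : E w ≤ 63/50 := by
      have := E_antitone (self_mem_Ici) (show w ∈ Ici (0:ℝ) from hw) hw
      linarith [E_zero_le]
    have huB : u ≤ (1+w^2) * (63/50) - w := by
      rw [hu]
      have := mul_le_mul_of_nonneg_left hE0 hden.le
      linarith
    have hfin : (w+1) * u ≤ 13/4 := by
      have h5 : (w+1) * u ≤ (w+1) * ((1+w^2) * (63/50) - w) :=
        mul_le_mul_of_nonneg_left huB (by linarith)
      have hw2 : w^2 ≤ 1 := by nlinarith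
      have hw3 : w^3 ≤ 1 := by nlinarith
      nlinarith
    linarith
  · -- w ≥ 1
    have hwpos : (0:ℝ) < w := by linarith
    have hE1 : E w ≤ 1/w := by
      have := wE_le_one w hw
      rw [le_div_iff₀ hwpos]
      linarith [mul_comm w (E w)]
    have huB : u ≤ 1/w := by
      rw [hu]
      have h6 : (1+w^2) * E w ≤ (1+w^2) * (1/w) := mul_le_mul_of_nonneg_left hE1 hden.le
      have h7 : (1+w^2) * (1/w) - w = 1/w := by field_simp; ring
      linarith
    have hfin : (w+1) * u ≤ 2 := by
      have h8 : (w+1) * u ≤ (w+1) * (1/w) := mul_le_mul_of_nonneg_left huB (by linarith)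
      have h9 : (w+1) * (1/w) = 1 + 1/w := by field_simp
      have h10 : 1/w ≤ 1 := by rw [div_le_one hwpos]; linarith
      linarith
    linarith

omit hL in
lemma phi_even (t : ℝ) : phi (-t) = phi t := by rw [phi, phi]; ring_nf

lemma lip_rev : LipschitzWith 1 (fun t => h (-t)) := by
  apply LipschitzWith.of_dist_le_mul
  intro a b
  calc dist (h (-a)) (h (-b)) ≤ 1 * dist (-a) (-b) := hL.dist_le_mul _ _
    _ = 1 * dist a b := by rw [dist_neg_neg]

lemma muG_rev : muG (fun t => h (-t)) = muG h := by
  have hmap : Measure.map (fun x : ℝ => -1 * x) gmeas = gmeas := by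
    rw [gmeas]
    have := gaussianReal_map_const_mul (μ := 0) (v := 1) (-1)
    have h2 : (NNReal.mk ((-1:ℝ)^2) (sq_nonneg _) * 1) = 1 := by
      ext; norm_num
    rw [h2, mul_zero] at this
    exact this
  have hint : ∫ t, h (-1 * t) ∂gmeas = ∫ t, h t ∂gmeas := by
    conv_rhs => rw [← hmap]
    rw [integral_map (by fun_prop) ((h_cont hL).aestronglyMeasurable)]
  rw [muG, muG, ← hint]
  congr 1
  funext t
  rw [neg_one_mul]

lemma hh_rev (t : ℝ) : hh (fun s => h (-s)) t = hh h (-t) := by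
  rw [hh, hh, muG_rev hL]

lemma T_rev (w : ℝ) : steinT (fun s => h (-s)) w = -(steinT h (-w)) := by
  have h1 : steinT (fun s => h (-s)) w = ∫ t in Iic w, hh h (-t) * phi (-t) := by
    rw [steinT]
    congr 1
    funext t
    rw [hh_rev hL, phi_even]
  rw [h1, integral_comp_neg_Iic w (fun t => hh h t * phi t)]
  have h2 := T_add_Ioi hL (-w)
  linarith

lemma F_rev (w : ℝ) : steinF (fun s => h (-s)) w = -(steinF h (-w)) := by
  rw [steinF, steinF, T_rev hL]
  have : (-w)^2 = w^2 := by ring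
  rw [this]
  ring

lemma F'_rev (w : ℝ) : steinF' (fun s => h (-s)) w = steinF' h (-w) := by
  rw [steinF', steinF', F_rev hL, hh_rev hL]
  ring

lemma G'_rev (w : ℝ) : steinG' (fun s => h (-s)) w = -(steinG' h (-w)) := by
  rw [steinG', steinG', F_rev hL, hh_rev hL]
  have : (-w)^2 = w^2 := by ring
  rw [this]
  ring

lemma bound_F'_all (w : ℝ) : |steinF' h w| ≤ 2 := by
  rcases le_or_gt 0 w with hw | hw
  · exact bound_F'_nonneg hL w hw
  · have h1 := bound_F'_nonneg (lip_rev hL) (-w) (by linarith)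
    rwa [F'_rev hL, neg_neg] at h1

lemma bound_G'_all (w : ℝ) : |steinG' h w| ≤ 17/4 := by
  rcases le_or_gt 0 w with hw | hw
  · exact bound_G'_nonneg hL w hw
  · have h1 := bound_G'_nonneg (lip_rev hL) (-w) (by linarith)
    rw [G'_rev hL, neg_neg, abs_neg] at h1
    exact h1

lemma diff_F : Differentiable ℝ (steinF h) := fun w => (hasDerivAt_F hL w).differentiableAt

lemma cont_F' : Continuous (steinF' h) := by
  have hcF : Continuous (steinF h) := (diff_F hL).continuous
  rw [show steinF' h = fun w => w * steinF h w + hh h w from rfl]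
  exact (continuous_id.mul hcF).add (hh_cont hL)

lemma G_lip (a b : ℝ) : |steinG h a - steinG h b| ≤ 17/4 * |a - b| := by
  have := Convex.norm_image_sub_le_of_norm_hasDerivWithin_le
    (f := steinG h) (f' := steinG' h) (C := 17/4) (s := univ)
    (fun w _ => (hasDerivAt_G hL w).hasDerivWithinAt)
    (fun w _ => by rw [Real.norm_eq_abs]; exact bound_G'_all hL w)
    convex_univ (mem_univ b) (mem_univ a)
  simpa [Real.norm_eq_abs] using this

lemma F'_diff_le (a b : ℝ) : |steinF' h a - steinF' h b| ≤ 21/4 * |a - b| := by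
  have hdec : ∀ w, steinF' h w = steinG h w + hh h w := fun w => rfl
  have h1 : |hh h a - hh h b| ≤ |a - b| := by
    have : hh h a - hh h b = h a - h b := by rw [hh, hh]; ring
    rw [this]
    exact lip_abs hL a b
  have h2 := G_lip hL a b
  calc |steinF' h a - steinF' h b|
      = |(steinG h a - steinG h b) + (hh h a - hh h b)| := by
        rw [hdec, hdec]; ring_nf
    _ ≤ |steinG h a - steinG h b| + |hh h a - hh h b| := abs_add_le _ _
    _ ≤ 21/4 * |a - b| := by linarith

lemma taylor_bound (u v : ℝ) (hvu : v ≤ u) :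
    |steinF h u - steinF h v - steinF' h u * (u - v)| ≤ 21/8 * (u - v)^2 := by
  have hInt : IntervalIntegrable (steinF' h) volume v u :=
    (cont_F' hL).intervalIntegrable v u
  have hFTC : steinF h u - steinF h v = ∫ t in v..u, steinF' h t :=
    (intervalIntegral.integral_eq_sub_of_hasDerivAt
      (fun t _ => hasDerivAt_F hL t) hInt).symm
  have hconst : steinF' h u * (u - v) = ∫ t in v..u, (steinF' h u : ℝ) := by
    rw [intervalIntegral.integral_const, smul_eq_mul]; ring
  have hdiff : steinF h u - steinF h v - steinF' h u * (u - v)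
      = ∫ t in v..u, (steinF' h t - steinF' h u) := by
    rw [hFTC, hconst, ← intervalIntegral.integral_sub hInt
      (intervalIntegrable_const)]
  rw [hdiff]
  have hb : ∀ᵐ t ∂(volume.restrict (Set.uIoc v u)), ‖steinF' h t - steinF' h u‖
      ≤ 21/4 * (u - t) := by
    rw [uIoc_of_le hvu]
    filter_upwards [ae_restrict_mem measurableSet_Ioc] with t ht
    rw [Real.norm_eq_abs]
    calc |steinF' h t - steinF' h u| ≤ 21/4 * |t - u| := F'_diff_le hL t u
      _ = 21/4 * (u - t) := by rw [abs_sub_comm, abs_of_nonneg (by linarith [ht.2])]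
  have hgInt : IntervalIntegrable (fun t => 21/4 * (u - t)) volume v u :=
    (by continuity : Continuous (fun t : ℝ => 21/4 * (u - t))).intervalIntegrable v u
  have hval : ∫ t in v..u, (21/4 * (u - t)) = 21/8 * (u - v)^2 := by
    rw [intervalIntegral.integral_const_mul]
    have h3 : ∫ t in v..u, (u - t) = (u - v)^2/2 := by
      rw [intervalIntegral.integral_sub intervalIntegrable_const
        (intervalIntegral.intervalIntegrable_id), intervalIntegral.integral_const,
        integral_id, smul_eq_mul]
      ring
    rw [h3]
    ring
  have := intervalIntegral.norm_integral_le_abs_of_norm_le hb hgInt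
  rw [hval] at this
  rw [Real.norm_eq_abs] at this
  calc |∫ t in v..u, (steinF' h t - steinF' h u)| ≤ |21/8 * (u - v)^2| := this
    _ = 21/8 * (u - v)^2 := abs_of_nonneg (by positivity)

end SteinBounds

/-! ### MIW sequence lemmas -/

section MIW

lemma Ssum_zero (x : ℕ → ℝ) : Ssum x 0 = 0 := by simp [Ssum]

lemma Ssum_one (x : ℕ → ℝ) : Ssum x 1 = x 1 := by simp [Ssum]

lemma Ssum_succ (x : ℕ → ℝ) (n : ℕ) : Ssum x (n+1) = Ssum x n + x (n+1) :=
  Finset.sum_Icc_succ_top (Nat.succ_le_succ (Nat.zero_le n)) x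

variable {N : ℕ} {x : ℕ → ℝ}

lemma S_pos (hN : 2 ≤ N) (hMIW : IsMIW N x)
    (hdec : ∀ n, 1 ≤ n → n < N → x (n + 1) < x n) :
    ∀ n, 1 ≤ n → n ≤ N - 1 → 0 < Ssum x n := by
  intro n h1 h2
  obtain ⟨hne, heq⟩ := hMIW n h1 h2
  have hlt := hdec n h1 (by omega)
  have hpos : 0 < 1 / Ssum x n := by rw [heq] at hlt; linarith
  exact one_div_pos.mp hpos

lemma telescope (hN : 2 ≤ N) (hMIW : IsMIW N x) :
    ∀ m, m ≤ N - 1 → x (m+1) = x 1 - ∑ i ∈ Finset.Icc 1 m, 1 / Ssum x i := by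
  intro m
  induction m with
  | zero => intro _; simp
  | succ k ih =>
    intro hk
    have hk' : k ≤ N - 1 := by omega
    obtain ⟨hne, heq⟩ := hMIW (k+1) (by omega) hk
    rw [heq, ih hk', Finset.sum_Icc_succ_top (Nat.succ_le_succ (Nat.zero_le k))]
    ring

lemma Ssum_N_eq (hmean : ∑ i ∈ Finset.Icc 1 N, x i = 0) : Ssum x N = 0 := hmean

lemma xN_eq (hN : 2 ≤ N) (hmean : ∑ i ∈ Finset.Icc 1 N, x i = 0) :
    x N = -(Ssum x (N-1)) := by
  have hsplit : N - 1 + 1 = N := by omega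
  have h1 : Ssum x N = Ssum x (N-1) + x N := by
    conv_lhs => rw [← hsplit]
    rw [Ssum_succ, hsplit]
  have h2 := Ssum_N_eq hmean
  linarith

lemma x1_pos (hN : 2 ≤ N) (hMIW : IsMIW N x)
    (hdec : ∀ n, 1 ≤ n → n < N → x (n + 1) < x n) : 0 < x 1 := by
  have := S_pos hN hMIW hdec 1 le_rfl (by omega)
  rwa [Ssum_one] at this

lemma xN_neg (hN : 2 ≤ N) (hMIW : IsMIW N x)
    (hdec : ∀ n, 1 ≤ n → n < N → x (n + 1) < x n)
    (hmean : ∑ i ∈ Finset.Icc 1 N, x i = 0) : x N < 0 := by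
  rw [xN_eq hN hmean]
  have := S_pos hN hMIW hdec (N-1) (by omega) le_rfl
  linarith

lemma log_step (m : ℝ) (hm : 1 ≤ m) : 1/(m+1) ≤ Real.log (m+1) - Real.log m := by
  have hm0 : 0 < m := by linarith
  have hm1 : 0 < m + 1 := by linarith
  have hdiv : (0:ℝ) < (m+1)/m := by positivity
  have hexp : rexp (1/(m+1)) ≤ (m+1)/m := by
    have key := Real.add_one_le_exp (-(1/(m+1)))
    have hval : -(1/(m+1)) + 1 = m/(m+1) := by field_simp; ring
    rw [hval] at key
    have hmm : (0:ℝ) < m/(m+1) := by positivity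
    have hrecip : rexp (1/(m+1)) = (rexp (-(1/(m+1))))⁻¹ := by
      rw [← Real.exp_neg]; ring_nf
    rw [hrecip]
    rw [inv_le_comm₀ (exp_pos _) hdiv]
    calc ((m+1)/m)⁻¹ = m/(m+1) := by rw [inv_div]
      _ ≤ rexp (-(1/(m+1))) := key
  have hlog : 1/(m+1) ≤ Real.log ((m+1)/m) := (Real.le_log_iff_exp_le hdiv).mpr hexp
  rwa [Real.log_div (by linarith) (by linarith)] at hlog

theorem x1_le (hN : 2 ≤ N) (hMIW : IsMIW N x)
    (hdec : ∀ n, 1 ≤ n → n < N → x (n + 1) < x n)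
    (hmean : ∑ i ∈ Finset.Icc 1 N, x i = 0) :
    x 1 ≤ 2 * Real.sqrt (Real.log N) := by
  by_contra hcon
  push_neg at hcon
  have ha : 0 < x 1 := x1_pos hN hMIW hdec
  have hN1 : (1:ℝ) ≤ (N:ℝ) := by exact_mod_cast Nat.one_le_of_lt hN
  have hL0 : 0 ≤ Real.log N := Real.log_nonneg hN1
  have hsq : 4 * Real.log N < (x 1)^2 := by
    have h1 := Real.sq_sqrt hL0
    nlinarith [Real.sqrt_nonneg (Real.log N), hcon]
  have hlog2 : (1:ℝ)/2 ≤ Real.log 2 := by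
    have := Real.log_two_gt_d9
    linarith
  -- main induction
  have main : ∀ n, 1 ≤ n → n ≤ N →
      x 1/2 ≤ x n ∧ x 1*(n+1)/2 ≤ Ssum x n ∧
      (∑ i ∈ Finset.Icc 1 n, 1/Ssum x i) ≤ 2/(x 1) * Real.log (n+1) := by
    intro n
    induction n with
    | zero => omega
    | succ k ih =>
      intro _ hkN
      rcases Nat.eq_zero_or_pos k with hk0 | hk1
      · subst hk0
        refine ⟨by linarith, ?_, ?_⟩
        · rw [Ssum_one]; push_cast; linarith
        · have : (∑ i ∈ Finset.Icc 1 1, 1/Ssum x i) = 1/(x 1) := by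
            simp [Ssum_one]
          rw [this]
          push_cast
          norm_num
          calc (x 1)⁻¹ = (2/(x 1)) * (1/2) := by field_simp
            _ ≤ 2/(x 1) * Real.log 2 := by
              apply mul_le_mul_of_nonneg_left hlog2 (by positivity)
      · obtain ⟨ihx, ihS, ihsum⟩ := ih hk1 (by omega)
        have hkr : (1:ℝ) ≤ (k:ℝ) := by exact_mod_cast hk1
        have hk1N : (k:ℝ) + 1 + 1 ≤ (N:ℝ) + 1 := by
          have : (k:ℝ) + 1 ≤ (N:ℝ) := by exact_mod_cast hkN
          linarith
        have hlogmono : Real.log ((k:ℝ)+1) ≤ Real.log N := by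
          apply Real.log_le_log (by linarith)
          have : (k:ℝ) + 1 ≤ (N:ℝ) := by exact_mod_cast hkN
          linarith
        have hxk1 : x 1/2 ≤ x (k+1) := by
          have htel := telescope hN hMIW k (by omega)
          have hsum_lt : (∑ i ∈ Finset.Icc 1 k, 1/Ssum x i) < x 1/2 := by
            calc (∑ i ∈ Finset.Icc 1 k, 1/Ssum x i) ≤ 2/(x 1) * Real.log (k+1) := ihsum
              _ ≤ 2/(x 1) * Real.log N := by
                apply mul_le_mul_of_nonneg_left hlogmono (by positivity)
              _ < x 1/2 := by
                rw [div_mul_eq_mul_div, div_lt_div_iff₀ (by positivity) (by norm_num)]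
                nlinarith
          rw [htel]
          linarith
        have hSk1 : x 1*((k+1:ℕ)+1)/2 ≤ Ssum x (k+1) := by
          rw [Ssum_succ]
          push_cast
          push_cast at ihS
          linarith
        refine ⟨hxk1, hSk1, ?_⟩
        have hSpos : 0 < Ssum x (k+1) := by
          have : (0:ℝ) < x 1*((k+1:ℕ)+1)/2 := by positivity
          linarith
        have hinv : 1/Ssum x (k+1) ≤ 2/(x 1 * ((k:ℝ)+2)) := by
          rw [div_le_div_iff₀ hSpos (by positivity)]
          push_cast at hSk1
          nlinarith
        have hstep := log_step ((k:ℝ)+1) (by linarith)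
        rw [Finset.sum_Icc_succ_top (Nat.succ_le_succ (Nat.zero_le k))]
        push_cast
        have heq2 : 2/(x 1 * ((k:ℝ)+2)) = 2/(x 1) * (1/((k:ℝ)+2)) := by
          field_simp
        calc (∑ i ∈ Finset.Icc 1 k, 1/Ssum x i) + 1/Ssum x (k+1)
            ≤ 2/(x 1) * Real.log ((k:ℝ)+1) + 2/(x 1) * (1/((k:ℝ)+2)) := by
              rw [← heq2]
              push_cast at ihsum
              linarith
          _ ≤ 2/(x 1) * (Real.log ((k:ℝ)+1) + (Real.log ((k:ℝ)+1+1) - Real.log ((k:ℝ)+1))) := by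
              rw [mul_add]
              have h9 : 2/(x 1) * (1/((k:ℝ)+2)) ≤ 2/(x 1) * (Real.log ((k:ℝ)+1+1) - Real.log ((k:ℝ)+1)) := by
                apply mul_le_mul_of_nonneg_left _ (by positivity)
                rw [show (k:ℝ)+2 = (k:ℝ)+1+1 by ring]
                exact hstep
              linarith
          _ = 2/(x 1) * Real.log ((k:ℝ)+1+1) := by ring_nf
  obtain ⟨hxN, _, _⟩ := main N (by omega) le_rfl
  have := xN_neg hN hMIW hdec hmean
  linarith

lemma rev_Ssum (hN : 2 ≤ N) (hmean : ∑ i ∈ Finset.Icc 1 N, x i = 0) :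
    ∀ n, n ≤ N → Ssum (fun i => -x (N+1-i)) n = Ssum x (N-n) := by
  intro n
  induction n with
  | zero =>
    intro _
    rw [Ssum_zero, Nat.sub_zero]
    exact (Ssum_N_eq hmean).symm
  | succ k ih =>
    intro hk
    rw [Ssum_succ, ih (by omega)]
    show Ssum x (N-k) + -x (N+1-(k+1)) = Ssum x (N-(k+1))
    have h1 : N+1-(k+1) = N-k := by omega
    have h2 : N-k = (N-(k+1))+1 := by omega
    rw [h1, h2, Ssum_succ]
    ring

lemma xN_ge (hN : 2 ≤ N) (hMIW : IsMIW N x)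
    (hdec : ∀ n, 1 ≤ n → n < N → x (n + 1) < x n)
    (hmean : ∑ i ∈ Finset.Icc 1 N, x i = 0) :
    -(x N) ≤ 2 * Real.sqrt (Real.log N) := by
  set y : ℕ → ℝ := fun i => -x (N+1-i) with hy
  have hrev := rev_Ssum hN hmean
  have e1 : ∀ n, 1 ≤ n → n ≤ N - 1 → y (n+1) = -x (N-n) := by
    intro n _ _
    show -x (N+1-(n+1)) = -x (N-n)
    congr 2
    omega
  have e2 : ∀ n, 1 ≤ n → n ≤ N - 1 → y n = -x ((N-n)+1) := by
    intro n _ _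
    show -x (N+1-n) = -x ((N-n)+1)
    congr 2
    omega
  have hMIWy : IsMIW N y := by
    intro n h1 h2
    have hSy : Ssum y n = Ssum x (N-n) := hrev n (by omega)
    have hm1 : 1 ≤ N - n := by omega
    have hm2 : N - n ≤ N - 1 := by omega
    have hSpos := S_pos hN hMIW hdec (N-n) hm1 hm2
    obtain ⟨hne, heq⟩ := hMIW (N-n) hm1 hm2
    refine ⟨by rw [hSy]; exact ne_of_gt hSpos, ?_⟩
    rw [e1 n h1 h2, e2 n h1 h2, heq, hSy]
    ring
  have hdecy : ∀ n, 1 ≤ n → n < N → y (n+1) < y n := by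
    intro n h1 h2
    rw [e1 n h1 (by omega), e2 n h1 (by omega)]
    have := hdec (N-n) (by omega) (by omega)
    linarith
  have hmeany : ∑ i ∈ Finset.Icc 1 N, y i = 0 := by
    have h3 := hrev N le_rfl
    rw [Nat.sub_self, Ssum_zero] at h3
    exact h3
  have hfin := x1_le hN hMIWy hdecy hmeany
  have hy1 : y 1 = -x N := by
    show -x (N+1-1) = -x N
    have : N+1-1 = N := by omega
    rw [this]
  rwa [hy1] at hfin

end MIW

section Assembly

lemma abel_sum (x c : ℕ → ℝ) : ∀ m : ℕ,
    ∑ n ∈ Finset.Icc 1 (m+1), x n * c n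
      = Ssum x (m+1) * c (m+1) + ∑ n ∈ Finset.Icc 1 m, Ssum x n * (c n - c (n+1)) := by
  intro m
  induction m with
  | zero => simp [Ssum_one]
  | succ k ih =>
    rw [Finset.sum_Icc_succ_top (Nat.succ_le_succ (Nat.zero_le (k+1))), ih,
      Finset.sum_Icc_succ_top (Nat.succ_le_succ (Nat.zero_le k)),
      Ssum_succ x (k+1)]
    ring

lemma gap_tel (x : ℕ → ℝ) : ∀ m : ℕ,
    ∑ n ∈ Finset.Icc 1 m, (x n - x (n+1)) = x 1 - x (m+1) := by
  intro m
  induction m with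
  | zero => simp
  | succ k ih =>
    rw [Finset.sum_Icc_succ_top (Nat.succ_le_succ (Nat.zero_le k)), ih]
    ring

lemma integrable_dirac_cont {g : ℝ → ℝ} (hg : Continuous g) (a : ℝ) :
    Integrable g (Measure.dirac a) := by
  refine ⟨hg.aestronglyMeasurable, ?_⟩
  rw [HasFiniteIntegral, lintegral_dirac' a
    (hg.measurable.enorm)]
  exact ENNReal.coe_lt_top

lemma emp_integral (N : ℕ) (x : ℕ → ℝ) {g : ℝ → ℝ} (hg : Continuous g) :
    ∫ w, g w ∂(empDist N x) = (N:ℝ)⁻¹ * ∑ n ∈ Finset.Icc 1 N, g (x n) := by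
  rw [empDist, MeasureTheory.integral_smul_measure,
    integral_finset_sum_measure (fun i _ => integrable_dirac_cont hg (x i))]
  have h1 : ∀ n, ∫ w, g w ∂(Measure.dirac (x n)) = g (x n) := fun n => integral_dirac g (x n)
  rw [Finset.sum_congr rfl (fun n _ => h1 n)]
  rw [smul_eq_mul]
  congr 1
  simp

end Assembly

end MIWAux

/-- Upper bound on the Wasserstein distance: for the unique strictly decreasing zero-mean
solution of the MIW recursion,
`d_W(P_N, γ) = sup_{h 1-Lipschitz} |∫ h dP_N - ∫ h dγ| ≤ 16 √(log N) / N`. -/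
theorem wasserstein_upper_bound (N : ℕ) (hN : 2 ≤ N) (x : ℕ → ℝ)
    (hMIW : IsMIW N x) (hdec : ∀ n, 1 ≤ n → n < N → x (n + 1) < x n)
    (hmean : ∑ i ∈ Finset.Icc 1 N, x i = 0) :
    ∀ h : ℝ → ℝ, LipschitzWith 1 h →
      |(∫ w, h w ∂(empDist N x)) - ∫ w, h w ∂(ProbabilityTheory.gaussianReal 0 1)| ≤
        16 * Real.sqrt (Real.log N) / N := by
  intro h hL
  have hcont : Continuous h := hL.continuous
  have hNR : (0:ℝ) < (N:ℝ) := by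
    have : 0 < N := by omega
    exact_mod_cast this
  have hemp := MIWAux.emp_integral N x hcont
  have hstein : ∀ w : ℝ, h w - MIWAux.muG h
      = MIWAux.steinF' h w - w * MIWAux.steinF h w := by
    intro w
    rw [MIWAux.steinF']
    show h w - MIWAux.muG h = w * MIWAux.steinF h w + MIWAux.hh h w - w * MIWAux.steinF h w
    rw [MIWAux.hh]
    ring
  set c : ℕ → ℝ := fun n => MIWAux.steinF h (x n) with hc
  set d : ℕ → ℝ := fun n => MIWAux.steinF' h (x n) with hd
  have hNsplit : (N-1)+1 = N := by omega
  have habel := MIWAux.abel_sum x c (N-1)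
  rw [hNsplit] at habel
  have hSN : Ssum x N = 0 := hmean
  rw [hSN, zero_mul, zero_add] at habel
  have hgap : ∀ n, 1 ≤ n → n ≤ N-1 → x n - x (n+1) = 1/Ssum x n := by
    intro n h1 h2
    obtain ⟨_, heq⟩ := hMIW n h1 h2
    rw [heq]; ring
  have hterm : ∀ n ∈ Finset.Icc 1 (N-1),
      |d n - Ssum x n * (c n - c (n+1))| ≤ 21/8 * (x n - x (n+1)) := by
    intro n hn
    rw [Finset.mem_Icc] at hn
    obtain ⟨h1, h2⟩ := hn
    have hS := MIWAux.S_pos hN hMIW hdec n h1 h2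
    have hg := hgap n h1 h2
    have hTay := MIWAux.taylor_bound hL (x n) (x (n+1))
      (le_of_lt (hdec n h1 (by omega)))
    have key : d n - Ssum x n * (c n - c (n+1))
        = -(Ssum x n * ((c n - c (n+1)) - d n * (x n - x (n+1)))) := by
      rw [hg]
      field_simp
      ring
    rw [key, abs_neg, abs_mul, abs_of_pos hS]
    calc Ssum x n * |(c n - c (n+1)) - d n * (x n - x (n+1))|
        ≤ Ssum x n * (21/8 * (x n - x (n+1))^2) :=
          mul_le_mul_of_nonneg_left hTay hS.le
      _ = 21/8 * (x n - x (n+1)) * (Ssum x n * (x n - x (n+1))) := by ring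
      _ = 21/8 * (x n - x (n+1)) := by
          rw [hg]
          field_simp
  have hsum1 : ∑ n ∈ Finset.Icc 1 N, (h (x n) - MIWAux.muG h)
      = d N + ∑ n ∈ Finset.Icc 1 (N-1), (d n - Ssum x n * (c n - c (n+1))) := by
    calc ∑ n ∈ Finset.Icc 1 N, (h (x n) - MIWAux.muG h)
        = ∑ n ∈ Finset.Icc 1 N, (d n - x n * c n) := by
          apply Finset.sum_congr rfl
          intro n _
          exact hstein (x n)
      _ = (∑ n ∈ Finset.Icc 1 N, d n) - ∑ n ∈ Finset.Icc 1 N, x n * c n :=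
          Finset.sum_sub_distrib _ _
      _ = (∑ n ∈ Finset.Icc 1 N, d n)
          - ∑ n ∈ Finset.Icc 1 (N-1), Ssum x n * (c n - c (n+1)) := by rw [habel]
      _ = d N + ∑ n ∈ Finset.Icc 1 (N-1), (d n - Ssum x n * (c n - c (n+1))) := by
          have hsplit : ∑ n ∈ Finset.Icc 1 N, d n
              = (∑ n ∈ Finset.Icc 1 (N-1), d n) + d N := by
            conv_lhs => rw [← hNsplit]
            rw [Finset.sum_Icc_succ_top (Nat.succ_le_succ (Nat.zero_le _)), hNsplit]
          rw [hsplit, Finset.sum_sub_distrib]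
          ring
  have hx1 := MIWAux.x1_le hN hMIW hdec hmean
  have hxN := MIWAux.xN_ge hN hMIW hdec hmean
  have hdN : |d N| ≤ 2 := MIWAux.bound_F'_all hL (x N)
  have hgapsum : ∑ n ∈ Finset.Icc 1 (N-1), (x n - x (n+1)) = x 1 - x N := by
    have h3 := MIWAux.gap_tel x (N-1)
    rw [hNsplit] at h3
    exact h3
  have habs : |∑ n ∈ Finset.Icc 1 N, (h (x n) - MIWAux.muG h)|
      ≤ 2 + 21/8 * (x 1 - x N) := by
    rw [hsum1]
    calc |d N + ∑ n ∈ Finset.Icc 1 (N-1), (d n - Ssum x n * (c n - c (n+1)))|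
        ≤ |d N| + |∑ n ∈ Finset.Icc 1 (N-1), (d n - Ssum x n * (c n - c (n+1)))| :=
          abs_add_le _ _
      _ ≤ 2 + ∑ n ∈ Finset.Icc 1 (N-1), |d n - Ssum x n * (c n - c (n+1))| :=
          add_le_add hdN (Finset.abs_sum_le_sum_abs _ _)
      _ ≤ 2 + ∑ n ∈ Finset.Icc 1 (N-1), 21/8 * (x n - x (n+1)) :=
          add_le_add_right (Finset.sum_le_sum hterm) 2
      _ = 2 + 21/8 * (x 1 - x N) := by rw [← Finset.mul_sum, hgapsum]
  have hLHS : (∫ w, h w ∂(empDist N x)) - ∫ w, h w ∂(ProbabilityTheory.gaussianReal 0 1)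
      = (N:ℝ)⁻¹ * ∑ n ∈ Finset.Icc 1 N, (h (x n) - MIWAux.muG h) := by
    rw [hemp]
    have hμ : ∫ w, h w ∂(ProbabilityTheory.gaussianReal 0 1) = MIWAux.muG h := rfl
    rw [hμ, Finset.sum_sub_distrib, Finset.sum_const, Nat.card_Icc]
    have hcard : N + 1 - 1 = N := by omega
    rw [hcard, nsmul_eq_mul, mul_sub]
    field_simp
  rw [hLHS, abs_mul, abs_of_pos (inv_pos.mpr hNR)]
  have hlogN : Real.log 2 ≤ Real.log N :=
    Real.log_le_log (by norm_num) (by exact_mod_cast hN)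
  have hlog2 := Real.log_two_gt_d9
  have hsq : 4/11 ≤ Real.sqrt (Real.log N) := by
    have h1 : Real.sqrt (16/121) ≤ Real.sqrt (Real.log N) :=
      Real.sqrt_le_sqrt (by norm_num at hlog2 ⊢; linarith)
    rwa [show (16/121:ℝ) = (4/11)^2 by norm_num, Real.sqrt_sq (by norm_num)] at h1
  have hfinal : 2 + 21/8 * (x 1 - x N) ≤ 16 * Real.sqrt (Real.log N) := by
    have hB : x 1 - x N ≤ 4 * Real.sqrt (Real.log N) := by linarith
    linarith
  calc (N:ℝ)⁻¹ * |∑ n ∈ Finset.Icc 1 N, (h (x n) - MIWAux.muG h)|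
      ≤ (N:ℝ)⁻¹ * (16 * Real.sqrt (Real.log N)) := by
        apply mul_le_mul_of_nonneg_left _ (inv_pos.mpr hNR).le
        exact le_trans habs hfinal
    _ = 16 * Real.sqrt (Real.log N) / N := by ring
end
end
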